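/- Let n be a nonempty finite type with decidable equality and d := card n, let γ : ℝ, and let ρ : Matrix n n ℂ be positive definite of trace 1. Let Δ(ρ) := Matrix.diagonal (fun i => ρ i i) be the diagonal part of ρ. Then Δ(ρ) is positive definite of trace 1 and −Re Tr[(γ • (Δ(ρ) − ρ)) * (log ρ − log((1/d : ℝ) • 1))] = γ · (D(ρ‖Δ(ρ)) + D(Δ(ρ)‖ρ)). -/

import Mathlib

open Matrix
open scoped ComplexOrder

/-- matrix logarithm via the continuous functional calculus -/
noncomputable def mlog {n : Type*} [Fintype n] [DecidableEq n] (A : Matrix n n ℂ) :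
    Matrix n n ℂ := cfc Real.log A

/-- quantum relative entropy `D(ρ‖σ) = Re Tr[ρ (log ρ − log σ)]` -/
noncomputable def relEnt {n : Type*} [Fintype n] [DecidableEq n]
    (ρ σ : Matrix n n ℂ) : ℝ := (Matrix.trace (ρ * (mlog ρ - mlog σ))).re

section DiagCfc

variable {n : Type*} [Fintype n] [DecidableEq n]

lemma mem_spectrum_diagonal (r : n → ℝ) (i : n) :
    r i ∈ spectrum ℝ (Matrix.diagonal (fun j => (r j : ℂ))) := by
  rw [← spectrum.algebraMap_mem_iff ℂ, spectrum_diagonal]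
  exact ⟨i, rfl⟩

/-- auxiliary star algebra homomorphism used to identify `cfc` on diagonal matrices -/
noncomputable def diagCfcHom (r : n → ℝ) :
    C(spectrum ℝ (Matrix.diagonal (fun j => (r j : ℂ)) : Matrix n n ℂ), ℝ) →⋆ₐ[ℝ]
      Matrix n n ℂ where
  toFun g := Matrix.diagonal (fun i => ((g ⟨r i, mem_spectrum_diagonal r i⟩ : ℝ) : ℂ))
  map_one' := by simp [Pi.one_def (M := fun _ : n => ℂ)]
  map_mul' f g := by
    simp only [ContinuousMap.coe_mul, Pi.mul_apply, Matrix.diagonal_mul_diagonal]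
    congr! with i <;> push_cast <;> ring
  map_zero' := by simp [Pi.zero_def (M := fun _ : n => ℂ)]
  map_add' f g := by
    simp only [ContinuousMap.coe_add, Pi.add_apply, Matrix.diagonal_add]
    congr! with i <;> push_cast <;> ring
  commutes' c := by
    simp only [Matrix.algebraMap_eq_diagonal]
    congr! with i <;> simp [Pi.algebraMap_apply, Algebra.algebraMap_eq_smul_one,
      Complex.real_smul]
  map_star' f := by
    simp only [star_trivial, Matrix.star_eq_conjTranspose, Matrix.diagonal_conjTranspose]
    congr! with i <;> simp [Pi.star_def]

lemma cfc_diagonal (r : n → ℝ) (f : ℝ → ℝ) :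
    cfc f (Matrix.diagonal (fun i => (r i : ℂ))) =
      Matrix.diagonal (fun i => (f (r i) : ℂ)) := by
  set Δ : Matrix n n ℂ := Matrix.diagonal (fun i => (r i : ℂ)) with hΔ
  have hsa : IsSelfAdjoint Δ := by
    rw [isSelfAdjoint_iff, Matrix.star_eq_conjTranspose, hΔ, Matrix.diagonal_conjTranspose]
    congr! with i <;> simp [Pi.star_def]
  letI : FiniteDimensional ℝ C(spectrum ℝ Δ, ℝ) :=
    FiniteDimensional.of_injective (ContinuousMap.coeFnLinearMap ℝ (M := ℝ))
      DFunLike.coe_injective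
  have hφc : Continuous (diagCfcHom r) :=
    LinearMap.continuous_of_finiteDimensional ((diagCfcHom r).toAlgHom.toLinearMap)
  have hid : (diagCfcHom r) ((ContinuousMap.id ℝ).restrict (spectrum ℝ Δ)) = Δ := rfl
  have hcfcHom := cfcHom_eq_of_continuous_of_map_id hsa (diagCfcHom r) hφc hid
  have hcont : ContinuousOn f (spectrum ℝ Δ) := by
    rw [continuousOn_iff_continuous_restrict]
    exact continuous_of_discreteTopology
  rw [cfc_apply f Δ hsa hcont, hcfcHom]
  rfl

lemma trace_mul_diagonal (M : Matrix n n ℂ) (w : n → ℂ) :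
    Matrix.trace (M * Matrix.diagonal w) = ∑ i, M i i * w i := by
  simp [Matrix.trace, Matrix.diag, Matrix.mul_diagonal]

end DiagCfc

/-- **Equation (2.21).** The entropy production of the decoherence semigroup
`𝓛^deco_*(ρ) = γ(Δ(ρ) − ρ)` equals `γ (D(ρ‖Δρ) + D(Δρ‖ρ))`; moreover `Δ(ρ)` is a
positive definite state. -/
theorem entropy_production_deco
    {n : Type*} [Fintype n] [DecidableEq n] [Nonempty n]
    (γ : ℝ) (ρ : Matrix n n ℂ) (hρ : ρ.PosDef) (hρtr : Matrix.trace ρ = 1) :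
    ((Matrix.diagonal (fun i => ρ i i)).PosDef ∧
      Matrix.trace (Matrix.diagonal (fun i => ρ i i)) = 1) ∧
    -(Matrix.trace ((γ • (Matrix.diagonal (fun i => ρ i i) - ρ)) *
        (mlog ρ - mlog ((1 / (Fintype.card n : ℝ)) • (1 : Matrix n n ℂ))))).re =
      γ * (relEnt ρ (Matrix.diagonal (fun i => ρ i i)) +
        relEnt (Matrix.diagonal (fun i => ρ i i)) ρ) := by
  have hdiag : ∀ i, 0 < ρ i i := by
    intro i
    exact hρ.diag_pos
  have hΔpos : (Matrix.diagonal (fun i => ρ i i)).PosDef :=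
    Matrix.posDef_diagonal_iff.mpr hdiag
  have htrρ : Matrix.trace ρ = ∑ i, ρ i i := rfl
  have hΔtr : Matrix.trace (Matrix.diagonal (fun i => ρ i i)) = 1 := by
    rw [Matrix.trace_diagonal, ← htrρ, hρtr]
  refine ⟨⟨hΔpos, hΔtr⟩, ?_⟩
  set r : n → ℝ := fun i => (ρ i i).re with hr
  have hre : ∀ i, ρ i i = ((r i : ℝ) : ℂ) := by
    intro i
    have h := hdiag i
    rw [Complex.lt_def] at h
    exact Complex.ext rfl h.2.symm
  have hΔr : Matrix.diagonal (fun i => ρ i i) =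
      Matrix.diagonal (fun i => ((r i : ℝ) : ℂ)) := by
    congr! with i
    exact hre i
  have hmlogΔ : mlog (Matrix.diagonal (fun i => ρ i i)) =
      Matrix.diagonal (fun i => ((Real.log (r i) : ℝ) : ℂ)) := by
    rw [mlog, hΔr, cfc_diagonal]
  have hmlog1 : mlog ((1 / (Fintype.card n : ℝ)) • (1 : Matrix n n ℂ)) =
      (Real.log (1 / (Fintype.card n : ℝ))) • (1 : Matrix n n ℂ) := by
    rw [mlog, ← Algebra.algebraMap_eq_smul_one, cfc_algebraMap,
      Algebra.algebraMap_eq_smul_one]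
  set Δ : Matrix n n ℂ := Matrix.diagonal (fun i => ρ i i) with hΔ
  set L : Matrix n n ℂ := mlog ρ with hL
  -- trace of (Δ - ρ) against the scalar log vanishes
  have t0 : Matrix.trace ((Δ - ρ) * mlog ((1 / (Fintype.card n : ℝ)) •
      (1 : Matrix n n ℂ))) = 0 := by
    rw [hmlog1, mul_smul_comm, mul_one, Matrix.trace_smul, Matrix.trace_sub, hΔtr, hρtr]
    simp
  -- the cross terms agree
  have tcross : Matrix.trace (ρ * mlog Δ) = Matrix.trace (Δ * mlog Δ) := by
    rw [hmlogΔ, trace_mul_diagonal, trace_mul_diagonal]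
    refine Finset.sum_congr rfl fun i _ => ?_
    rw [hΔ, Matrix.diagonal_apply_eq]
  -- now expand everything
  rw [relEnt, relEnt]
  rw [smul_mul_assoc, Matrix.trace_smul, mul_sub, Matrix.trace_sub, t0, sub_zero]
  rw [mul_sub, mul_sub, Matrix.trace_sub, Matrix.trace_sub, tcross]
  rw [sub_mul, Matrix.trace_sub]
  simp only [Complex.real_smul, Complex.mul_re, Complex.ofReal_re, Complex.ofReal_im,
    Complex.sub_re]
  ring
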